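/- arXiv:1701.07111 — 3 statements merged into one kernel-verified Lean document; each statement's English description precedes it below -/
import Mathlib

section
/- Let 0 ≤ η ≤ 1, ε > 0, and define Υ(n₁,n₂,k) = (3.5^{3.5}/Γ(3.5)) · (η^{n₂}(1-η)^{n₁}/(n₁! n₂!)) · Γ(n₁+n₂+k) / (ε^k (1+3.5/ε)^{n₁+n₂+k}). Then summing Υ(n₁,n₂,3.5) over n₂ ∈ ℕ for fixed n₁ gives the marginal PMF (3.5^{3.5} Γ(n₁+3.5) ε₁^{n₁} (3.5+ε₁)^{-n₁-3.5})/(n₁! Γ(3.5)) with ε₁ = (1-η)ε. -/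
open MeasureTheory Set Filter

lemma gamma_ratio_summable (a : ℝ) (ha : 0 < a) {x : ℝ} (hx0 : 0 < x) (hx1 : x < 1) :
    Summable (fun n : ℕ => Real.Gamma (a + n) * x ^ n / n.factorial) := by
  apply summable_of_ratio_test_tendsto_lt_one hx1
  · filter_upwards with n
    have h1 : 0 < Real.Gamma (a + n) := Real.Gamma_pos_of_pos (by positivity)
    have h2 : (0:ℝ) < n.factorial := by positivity
    positivity
  · have key : ∀ n : ℕ, ‖Real.Gamma (a + (n+1):ℝ) * x ^ (n+1) / ((n+1).factorial : ℝ)‖ /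
        ‖Real.Gamma (a + n) * x ^ n / n.factorial‖ = (a + n) * x / (n + 1) := by
      intro n
      have h1 : 0 < Real.Gamma (a + n) := Real.Gamma_pos_of_pos (by positivity)
      have hG : Real.Gamma (a + (n+1):ℝ) = (a + n) * Real.Gamma (a + n) := by
        have : (a + (n+1):ℝ) = (a + n) + 1 := by push_cast; ring
        rw [this, Real.Gamma_add_one (by positivity)]
      have hfac : ((n+1).factorial : ℝ) = (n+1) * n.factorial := by
        rw [Nat.factorial_succ]; push_cast; ring
      have h2 : (0:ℝ) < n.factorial := by positivity
      rw [Real.norm_of_nonneg (by positivity), Real.norm_of_nonneg (by positivity), hG, hfac]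
      have han : (0:ℝ) < a + n := by positivity
      field_simp
      ring
    have : Tendsto (fun n : ℕ => (a + n) * x / (n + 1)) atTop (nhds x) := by
      have h0 : Tendsto (fun n : ℕ => 1 / ((n:ℝ) + 1)) atTop (nhds 0) :=
        tendsto_one_div_add_atTop_nhds_zero_nat
      have : Tendsto (fun n : ℕ => ((a - 1) * (1 / ((n:ℝ)+1)) + 1) * x) atTop
          (nhds (((a - 1) * 0 + 1) * x)) := by
        exact (((h0.const_mul (a-1)).add tendsto_const_nhds).mul tendsto_const_nhds)
      simp only [mul_zero, zero_add, one_mul] at this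
      convert this using 2 with n
      have : ((n:ℝ) + 1) ≠ 0 := by positivity
      field_simp
      ring
    refine this.congr' ?_
    filter_upwards with n
    rw [← key n]
    norm_num

lemma gamma_series (a : ℝ) (ha : 0 < a) {x : ℝ} (hx0 : 0 ≤ x) (hx1 : x < 1) :
    ∑' n : ℕ, Real.Gamma (a + n) * x ^ n / n.factorial
      = (1 - x) ^ (-a) * Real.Gamma a := by
  rcases eq_or_lt_of_le hx0 with h0 | h0
  · rw [tsum_eq_single 0 (by intro n hn; rw [← h0]; simp [zero_pow hn])]
    rw [← h0]
    simp [Real.rpow_neg]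
  · have h1x : (0:ℝ) < 1 - x := by linarith
    set F : ℕ → ℝ → ℝ := fun n t => Real.exp (-t) * t ^ (a - 1) * (x ^ n * t ^ n / n.factorial)
      with hF
    have hFeq : ∀ n : ℕ, EqOn (F n)
        (fun t => (x ^ n / n.factorial) * (Real.exp (-t) * t ^ (a + n - 1))) (Ioi 0) := by
      intro n t ht
      have ht0 : (0:ℝ) < t := ht
      simp only [hF]
      rw [show (a + n - 1 : ℝ) = (a - 1) + n by ring, Real.rpow_add ht0,
        Real.rpow_natCast]
      ring
    have hint : ∀ n : ℕ, IntegrableOn (F n) (Ioi 0) := by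
      intro n
      exact (IntegrableOn.congr_fun
        ((Real.GammaIntegral_convergent (by positivity : (0:ℝ) < a + n)).const_mul _)
        (hFeq n).symm measurableSet_Ioi)
    have hval : ∀ n : ℕ, ∫ t in Ioi 0, F n t = Real.Gamma (a + n) * x ^ n / n.factorial := by
      intro n
      rw [setIntegral_congr_fun measurableSet_Ioi (hFeq n), integral_const_mul,
        ← Real.Gamma_eq_integral (by positivity : (0:ℝ) < a + n)]
      ring
    have hnorm : ∀ n : ℕ, ∫ t in Ioi 0, ‖F n t‖ = Real.Gamma (a + n) * x ^ n / n.factorial := by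
      intro n
      rw [← hval n]
      refine setIntegral_congr_fun measurableSet_Ioi (fun t ht => ?_)
      have ht0 : (0:ℝ) < t := ht
      have h2 : (0:ℝ) < n.factorial := by positivity
      apply Real.norm_of_nonneg
      simp only [hF]
      positivity
    have hsum : Summable (fun n : ℕ => ∫ t in Ioi 0, ‖F n t‖) := by
      simp only [hnorm]
      exact gamma_ratio_summable a ha h0 hx1
    calc ∑' n : ℕ, Real.Gamma (a + n) * x ^ n / n.factorial
        = ∑' n : ℕ, ∫ t in Ioi 0, F n t := by simp only [hval]
      _ = ∫ t in Ioi 0, ∑' n : ℕ, F n t :=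
          integral_tsum_of_summable_integral_norm hint hsum
      _ = ∫ t in Ioi 0, t ^ (a - 1) * Real.exp (-((1 - x) * t)) := by
          refine setIntegral_congr_fun measurableSet_Ioi (fun t ht => ?_)
          have ht0 : (0:ℝ) < t := ht
          have hexp : Real.exp (x * t) = ∑' n : ℕ, (x * t) ^ n / n.factorial := by
            rw [Real.exp_eq_exp_ℝ, NormedSpace.exp_eq_tsum_div]
          have : ∑' n : ℕ, F n t
              = Real.exp (-t) * t ^ (a - 1) * ∑' n : ℕ, (x * t) ^ n / n.factorial := by
            rw [← tsum_mul_left]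
            exact tsum_congr fun n => by simp only [hF, mul_pow]
          rw [this, ← hexp]
          rw [show (-((1 - x) * t)) = -t + x * t by ring, Real.exp_add]
          ring
      _ = (1 / (1 - x)) ^ a * Real.Gamma a :=
          Real.integral_rpow_mul_exp_neg_mul_Ioi ha h1x
      _ = (1 - x) ^ (-a) * Real.Gamma a := by
          rw [one_div, Real.inv_rpow h1x.le, ← Real.rpow_neg h1x.le]

/-- Marginalizing the joint UL/DL load PMF Υ(n₁,n₂,3.5) over n₂ gives the
single-type load PMF with mean ε₁ = (1-η)ε. -/
theorem stmt3 (ε η : ℝ) (hε : 0 < ε) (hη0 : 0 ≤ η) (hη1 : η ≤ 1) (n₁ : ℕ) :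
    ∑' n₂ : ℕ, ((3.5 : ℝ) ^ (3.5 : ℝ) / Real.Gamma 3.5 *
        (η ^ n₂ * (1 - η) ^ n₁ / ((n₁.factorial : ℝ) * (n₂.factorial : ℝ))) *
        Real.Gamma ((n₁ : ℝ) + (n₂ : ℝ) + 3.5) /
        (ε ^ (3.5 : ℝ) * (1 + 3.5 / ε) ^ ((n₁ : ℝ) + (n₂ : ℝ) + 3.5)))
      = ((3.5 : ℝ) ^ (3.5 : ℝ) * Real.Gamma ((n₁ : ℝ) + 3.5) * ((1 - η) * ε) ^ n₁ *
          (3.5 + (1 - η) * ε) ^ (-(n₁ : ℝ) - 3.5)) / ((n₁.factorial : ℝ) * Real.Gamma 3.5) := by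
  have hp0 : (0:ℝ) < 1 + 3.5 / ε := by positivity
  set p : ℝ := 1 + 3.5 / ε with hp
  set a : ℝ := (n₁ : ℝ) + 3.5 with ha
  have ha0 : 0 < a := by positivity
  set x : ℝ := η / p with hx
  have hx0 : 0 ≤ x := by positivity
  have hp1 : (1:ℝ) < p := by
    have := div_pos (by norm_num : (0:ℝ) < 3.5) hε
    rw [hp]; linarith
  have hx1 : x < 1 := by
    rw [hx, div_lt_one hp0]; linarith
  set K : ℝ := (3.5 : ℝ) ^ (3.5 : ℝ) / Real.Gamma 3.5 * ((1 - η) ^ n₁ / (n₁.factorial : ℝ)) *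
    (1 / (ε ^ (3.5 : ℝ) * p ^ a)) with hK
  have hterm : ∀ n₂ : ℕ, ((3.5 : ℝ) ^ (3.5 : ℝ) / Real.Gamma 3.5 *
        (η ^ n₂ * (1 - η) ^ n₁ / ((n₁.factorial : ℝ) * (n₂.factorial : ℝ))) *
        Real.Gamma ((n₁ : ℝ) + (n₂ : ℝ) + 3.5) /
        (ε ^ (3.5 : ℝ) * p ^ ((n₁ : ℝ) + (n₂ : ℝ) + 3.5)))
      = K * (Real.Gamma (a + n₂) * x ^ n₂ / n₂.factorial) := by
    intro n₂
    have he : ((n₁ : ℝ) + (n₂ : ℝ) + 3.5) = a + n₂ := by rw [ha]; ring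
    have hps : p ^ ((n₁ : ℝ) + (n₂ : ℝ) + 3.5) = p ^ a * p ^ n₂ := by
      rw [he, Real.rpow_add hp0, Real.rpow_natCast]
    have hxp : x ^ n₂ = η ^ n₂ / p ^ n₂ := div_pow η p n₂
    have hG : Real.Gamma 3.5 ≠ 0 := (Real.Gamma_pos_of_pos (by norm_num)).ne'
    have hf1 : ((n₁.factorial : ℝ)) ≠ 0 := by positivity
    have hf2 : ((n₂.factorial : ℝ)) ≠ 0 := by positivity
    have hε35 : ε ^ (3.5 : ℝ) ≠ 0 := by positivity
    have hpa : p ^ a ≠ 0 := by positivity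
    have hpn : p ^ n₂ ≠ 0 := by positivity
    rw [hps, he, hK, hxp]
    field_simp
  rw [tsum_congr hterm, tsum_mul_left, gamma_series a ha0 hx0 hx1]
  -- final algebra
  have h1x : 1 - x = (3.5 + (1 - η) * ε) / (ε + 3.5) := by
    rw [hx, hp]
    field_simp
    ring
  have he1 : (0:ℝ) ≤ 3.5 + (1 - η) * ε := by nlinarith
  have hes : (0:ℝ) < ε + 3.5 := by linarith
  have hrw : (1 - x) ^ (-a) = (3.5 + (1 - η) * ε) ^ (-a) * (ε + 3.5) ^ a := by
    rw [h1x, Real.div_rpow he1 hes.le, Real.rpow_neg hes.le, div_eq_mul_inv, inv_inv]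
  have hpe : p ^ a = (ε + 3.5) ^ a / ε ^ a := by
    rw [hp, show (1 + 3.5 / ε) = (ε + 3.5) / ε by field_simp, Real.div_rpow hes.le hε.le]
  have hea : ε ^ a = ε ^ (3.5:ℝ) * ε ^ (n₁:ℕ) := by
    rw [ha, add_comm, Real.rpow_add hε, Real.rpow_natCast]
  have hne : -(n₁ : ℝ) - 3.5 = -a := by rw [ha]; ring
  rw [hK, hrw, hpe, hne]
  have h1 : (ε + 3.5) ^ a ≠ 0 := by positivity
  have h2 : ε ^ (3.5:ℝ) ≠ 0 := by positivity
  have h3 : ((n₁.factorial : ℝ)) ≠ 0 := by positivity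
  have hG : Real.Gamma 3.5 ≠ 0 := (Real.Gamma_pos_of_pos (by norm_num)).ne'
  have h4 : ε ^ a ≠ 0 := by positivity
  rw [hea, mul_pow]
  field_simp
end

section
/- For 0 ≤ η ≤ 1, ε > 0, and k = 3.5, the joint PMF Υ(n₁,n₂,3.5) = (3.5^{3.5}/Γ(3.5)) · (η^{n₂}(1-η)^{n₁}/(n₁! n₂!)) · Γ(n₁+n₂+3.5)/(ε^{3.5}(1+3.5/ε)^{n₁+n₂+3.5}) sums to 1 over all (n₁,n₂) ∈ ℕ². -/
open MeasureTheory Real Set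

/-- Negative binomial series, in `ℝ≥0∞`. -/
lemma nb_sum {K x : ℝ} (hK : 0 < K) (hx0 : 0 ≤ x) (hx1 : x < 1) :
    ∑' n : ℕ, ENNReal.ofReal (Real.Gamma ((n : ℝ) + K) / (n.factorial : ℝ) * x ^ n)
      = ENNReal.ofReal (Real.Gamma K * (1 - x) ^ (-K : ℝ)) := by
  have hr : 0 < 1 - x := by linarith
  have h1 : ∀ n : ℕ, ENNReal.ofReal (Real.Gamma ((n : ℝ) + K) / (n.factorial : ℝ) * x ^ n)
      = ∫⁻ t in Ioi (0:ℝ),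
          ENNReal.ofReal (exp (-t) * t ^ ((n : ℝ) + K - 1) * (x ^ n / (n.factorial : ℝ))) := by
    intro n
    have hnK : 0 < (n : ℝ) + K := by positivity
    have hint : IntegrableOn
        (fun t : ℝ => exp (-t) * t ^ ((n : ℝ) + K - 1) * (x ^ n / (n.factorial : ℝ)))
        (Ioi 0) := (Real.GammaIntegral_convergent hnK).mul_const _
    have hval : Real.Gamma ((n : ℝ) + K) / (n.factorial : ℝ) * x ^ n
        = ∫ t in Ioi (0:ℝ), exp (-t) * t ^ ((n : ℝ) + K - 1) * (x ^ n / (n.factorial : ℝ)) := by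
      rw [MeasureTheory.integral_mul_const, ← Real.Gamma_eq_integral hnK]
      ring
    rw [hval, MeasureTheory.ofReal_integral_eq_lintegral_ofReal hint]
    refine (ae_restrict_iff' measurableSet_Ioi).mpr (ae_of_all _ fun t ht => ?_)
    have ht' : 0 < t := ht
    positivity
  calc ∑' n : ℕ, ENNReal.ofReal (Real.Gamma ((n : ℝ) + K) / (n.factorial : ℝ) * x ^ n)
      = ∑' n : ℕ, ∫⁻ t in Ioi (0:ℝ),
          ENNReal.ofReal (exp (-t) * t ^ ((n : ℝ) + K - 1) * (x ^ n / (n.factorial : ℝ))) :=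
        tsum_congr h1
    _ = ∫⁻ t in Ioi (0:ℝ), ∑' n : ℕ,
          ENNReal.ofReal (exp (-t) * t ^ ((n : ℝ) + K - 1) * (x ^ n / (n.factorial : ℝ))) := by
        refine (lintegral_tsum fun n => ?_).symm
        apply Measurable.aemeasurable
        fun_prop
    _ = ∫⁻ t in Ioi (0:ℝ), ENNReal.ofReal (t ^ (K - 1) * exp (-((1 - x) * t))) := by
        refine setLIntegral_congr_fun measurableSet_Ioi (fun t ht => ?_)
        have ht' : (0:ℝ) < t := ht
        have hterm : ∀ n : ℕ, exp (-t) * t ^ ((n : ℝ) + K - 1) * (x ^ n / (n.factorial : ℝ))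
            = exp (-t) * t ^ (K - 1) * ((x * t) ^ n / (n.factorial : ℝ)) := by
          intro n
          rw [show (n : ℝ) + K - 1 = (n : ℝ) + (K - 1) by ring, Real.rpow_add ht',
            Real.rpow_natCast, mul_pow]
          ring
        simp_rw [hterm]
        have hsum : Summable fun n : ℕ => exp (-t) * t ^ (K - 1) * ((x * t) ^ n / (n.factorial : ℝ)) :=
          (Real.summable_pow_div_factorial (x * t)).mul_left _
        rw [← ENNReal.ofReal_tsum_of_nonneg (fun n => by positivity) hsum]
        congr 1
        rw [tsum_mul_left]
        have hexp : ∑' n : ℕ, (x * t) ^ n / (n.factorial : ℝ) = Real.exp (x * t) := by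
          rw [Real.exp_eq_exp_ℝ, NormedSpace.exp_eq_tsum_div]
        rw [hexp, show -((1 - x) * t) = -t + x * t by ring, Real.exp_add]
        ring
    _ = ENNReal.ofReal (Real.Gamma K * (1 - x) ^ (-K : ℝ)) := by
        have hint2 : IntegrableOn (fun t : ℝ => t ^ (K - 1) * exp (-((1 - x) * t))) (Ioi 0) := by
          have := integrableOn_rpow_mul_exp_neg_mul_rpow (p := 1) (s := K - 1) (b := 1 - x)
            (by linarith) zero_lt_one hr
          refine this.congr_fun (fun t ht => ?_) measurableSet_Ioi
          dsimp only
          rw [Real.rpow_one, neg_mul]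
        rw [← MeasureTheory.ofReal_integral_eq_lintegral_ofReal hint2
          ((ae_restrict_iff' measurableSet_Ioi).mpr (ae_of_all _ fun t ht => by
            have ht' : (0:ℝ) < t := ht
            positivity)),
          Real.integral_rpow_mul_exp_neg_mul_Ioi hK hr]
        congr 1
        rw [one_div, Real.inv_rpow hr.le, ← Real.rpow_neg hr.le, mul_comm]

/-- the binomial identity on the antidiagonal -/
lemma bino_sum (η : ℝ) (n : ℕ) :
    ∑ kl ∈ Finset.HasAntidiagonal.antidiagonal n, η ^ kl.2 * (1 - η) ^ kl.1 / ((kl.1.factorial : ℝ) * (kl.2.factorial : ℝ))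
      = 1 / (n.factorial : ℝ) := by
  rw [Finset.Nat.sum_antidiagonal_eq_sum_range_succ_mk]
  have key_i : ∀ i ∈ Finset.range (n + 1),
      η ^ (n - i) * (1 - η) ^ i / ((i.factorial : ℝ) * ((n - i).factorial : ℝ))
        = (1 - η) ^ i * η ^ (n - i) * (n.choose i : ℝ) / (n.factorial : ℝ) := by
    intro i hi
    have h : i ≤ n := Nat.lt_succ_iff.mp (Finset.mem_range.mp hi)
    have hfact : (n.choose i : ℝ) * (i.factorial : ℝ) * ((n - i).factorial : ℝ)
        = (n.factorial : ℝ) := by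
      exact_mod_cast congrArg (Nat.cast : ℕ → ℝ) (Nat.choose_mul_factorial_mul_factorial h)
    have h1 : (i.factorial : ℝ) ≠ 0 := Nat.cast_ne_zero.mpr i.factorial_ne_zero
    have h2 : ((n - i).factorial : ℝ) ≠ 0 := Nat.cast_ne_zero.mpr (n - i).factorial_ne_zero
    have h3 : (n.factorial : ℝ) ≠ 0 := Nat.cast_ne_zero.mpr n.factorial_ne_zero
    field_simp
    linear_combination (-(η ^ (n - i) * (1 - η) ^ i)) * hfact
  rw [Finset.sum_congr rfl key_i]
  simp_rw [div_eq_mul_inv, ← Finset.sum_mul, ← add_pow]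
  simp

/-- The joint load PMF Υ(n₁,n₂,3.5) sums to 1 over all (n₁,n₂) ∈ ℕ². -/
theorem stmt4 (ε η : ℝ) (hε : 0 < ε) (hη0 : 0 ≤ η) (hη1 : η ≤ 1) :
    ∑' p : ℕ × ℕ, ((3.5 : ℝ) ^ (3.5 : ℝ) / Real.Gamma 3.5 *
        (η ^ p.2 * (1 - η) ^ p.1 / ((p.1.factorial : ℝ) * (p.2.factorial : ℝ))) *
        Real.Gamma ((p.1 : ℝ) + (p.2 : ℝ) + 3.5) /
        (ε ^ (3.5 : ℝ) * (1 + 3.5 / ε) ^ ((p.1 : ℝ) + (p.2 : ℝ) + 3.5))) = 1 := by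
  have h1η : (0:ℝ) ≤ 1 - η := by linarith
  have hG : 0 < Real.Gamma 3.5 := Real.Gamma_pos_of_pos (by norm_num)
  have hεk : (0:ℝ) < ε + 3.5 := by linarith
  set f : ℕ × ℕ → ℝ := fun p => (3.5 : ℝ) ^ (3.5 : ℝ) / Real.Gamma 3.5 *
        (η ^ p.2 * (1 - η) ^ p.1 / ((p.1.factorial : ℝ) * (p.2.factorial : ℝ))) *
        Real.Gamma ((p.1 : ℝ) + (p.2 : ℝ) + 3.5) /
        (ε ^ (3.5 : ℝ) * (1 + 3.5 / ε) ^ ((p.1 : ℝ) + (p.2 : ℝ) + 3.5)) with hf_def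
  have hf : ∀ p : ℕ × ℕ, 0 ≤ f p := by
    intro p
    have hb : (0:ℝ) < 1 + 3.5 / ε := by positivity
    have hGp : 0 < Real.Gamma ((p.1 : ℝ) + (p.2 : ℝ) + 3.5) :=
      Real.Gamma_pos_of_pos (by positivity)
    have hη' : 0 ≤ η ^ p.2 := by positivity
    have h1η' : 0 ≤ (1 - η) ^ p.1 := pow_nonneg h1η _
    simp only [hf_def]
    positivity
  -- constants
  set q : ℝ := ε / (ε + 3.5) with hq_def
  have hq0 : 0 ≤ q := by positivity
  have hq1 : q < 1 := (div_lt_one hεk).mpr (by linarith)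
  set c : ℝ := (3.5 : ℝ) ^ (3.5 : ℝ) / (Real.Gamma 3.5 * (ε + 3.5) ^ (3.5 : ℝ)) with hc_def
  have hc0 : 0 ≤ c := by positivity
  -- per-n real identity
  have hrow : ∀ n : ℕ, ∑ kl ∈ Finset.HasAntidiagonal.antidiagonal n, f kl
      = c * (Real.Gamma ((n : ℝ) + 3.5) / (n.factorial : ℝ) * q ^ n) := by
    intro n
    have hstep : ∀ kl ∈ Finset.HasAntidiagonal.antidiagonal n, f kl
        = ((3.5 : ℝ) ^ (3.5 : ℝ) / Real.Gamma 3.5 * Real.Gamma ((n : ℝ) + 3.5) /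
            (ε ^ (3.5 : ℝ) * (1 + 3.5 / ε) ^ ((n : ℝ) + 3.5))) *
          (η ^ kl.2 * (1 - η) ^ kl.1 / ((kl.1.factorial : ℝ) * (kl.2.factorial : ℝ))) := by
      intro kl hkl
      have hkln : ((kl.1 : ℝ) + (kl.2 : ℝ)) = (n : ℝ) := by
        exact_mod_cast congrArg (Nat.cast : ℕ → ℝ) (Finset.HasAntidiagonal.mem_antidiagonal.mp hkl)
      simp only [hf_def, hkln]
      ring
    rw [Finset.sum_congr rfl hstep, ← Finset.mul_sum, bino_sum]
    -- now the rpow algebra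
    have hbase : 1 + 3.5 / ε = (ε + 3.5) / ε := by field_simp
    have hεpos : (0:ℝ) < ε ^ (3.5 : ℝ) := Real.rpow_pos_of_pos hε _
    have hεn : (0:ℝ) < ε ^ (n : ℝ) := Real.rpow_pos_of_pos hε _
    have hεkpos : (0:ℝ) < (ε + 3.5) ^ (3.5 : ℝ) := Real.rpow_pos_of_pos hεk _
    have hεkn : (0:ℝ) < (ε + 3.5) ^ (n : ℝ) := Real.rpow_pos_of_pos hεk _
    rw [hbase, Real.div_rpow hεk.le hε.le, Real.rpow_add hεk, Real.rpow_add hε]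
    have hqn : q ^ n = ε ^ (n : ℝ) / (ε + 3.5) ^ (n : ℝ) := by
      rw [hq_def, div_pow, ← Real.rpow_natCast ε, ← Real.rpow_natCast (ε + 3.5)]
    rw [hc_def, hqn]
    field_simp
  -- the ENNReal computation
  have key : ∑' p : ℕ × ℕ, ENNReal.ofReal (f p) = 1 := by
    have e := Finset.HasAntidiagonal.sigmaAntidiagonalEquivProd (A := ℕ)
    calc ∑' p : ℕ × ℕ, ENNReal.ofReal (f p)
        = ∑' x : Σ n : ℕ, Finset.HasAntidiagonal.antidiagonal n, ENNReal.ofReal (f x.2) :=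
          (Finset.HasAntidiagonal.sigmaAntidiagonalEquivProd.tsum_eq fun p => ENNReal.ofReal (f p)).symm
      _ = ∑' (n : ℕ) (kl : Finset.HasAntidiagonal.antidiagonal n), ENNReal.ofReal (f kl) :=
          ENNReal.tsum_sigma' _
      _ = ∑' n : ℕ, ENNReal.ofReal (c * (Real.Gamma ((n : ℝ) + 3.5) / (n.factorial : ℝ) * q ^ n)) := by
          refine tsum_congr fun n => ?_
          rw [Finset.tsum_subtype (Finset.HasAntidiagonal.antidiagonal n) (fun kl => ENNReal.ofReal (f kl)),
            ← ENNReal.ofReal_sum_of_nonneg (fun kl _ => hf kl), hrow n]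
      _ = ENNReal.ofReal c * ∑' n : ℕ,
            ENNReal.ofReal (Real.Gamma ((n : ℝ) + 3.5) / (n.factorial : ℝ) * q ^ n) := by
          simp_rw [ENNReal.ofReal_mul hc0]
          rw [ENNReal.tsum_mul_left]
      _ = ENNReal.ofReal c * ENNReal.ofReal (Real.Gamma 3.5 * (1 - q) ^ (-(3.5:ℝ))) := by
          rw [nb_sum (by norm_num) hq0 hq1]
      _ = 1 := by
          rw [← ENNReal.ofReal_mul hc0]
          have h1q : 1 - q = 3.5 / (ε + 3.5) := by
            rw [hq_def]; field_simp; ring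
          have hneg : ((3.5:ℝ) / (ε + 3.5)) ^ (-(3.5:ℝ))
              = (ε + 3.5) ^ (3.5:ℝ) / (3.5:ℝ) ^ (3.5:ℝ) := by
            rw [Real.rpow_neg (by positivity), Real.div_rpow (by norm_num) hεk.le]
            rw [inv_div]
          rw [h1q, hneg, hc_def]
          have hεkpos : (0:ℝ) < (ε + 3.5) ^ (3.5 : ℝ) := Real.rpow_pos_of_pos hεk _
          have h35 : (0:ℝ) < (3.5:ℝ) ^ (3.5 : ℝ) := Real.rpow_pos_of_pos (by norm_num) _
          rw [show (3.5 : ℝ) ^ (3.5 : ℝ) / (Real.Gamma 3.5 * (ε + 3.5) ^ (3.5 : ℝ)) *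
              (Real.Gamma 3.5 * ((ε + 3.5) ^ (3.5:ℝ) / (3.5:ℝ) ^ (3.5:ℝ))) = 1 by
            field_simp]
          exact ENNReal.ofReal_one
  calc ∑' p : ℕ × ℕ, f p = ∑' p : ℕ × ℕ, (ENNReal.ofReal (f p)).toReal :=
        tsum_congr fun p => (ENNReal.toReal_ofReal (hf p)).symm
    _ = (∑' p : ℕ × ℕ, ENNReal.ofReal (f p)).toReal :=
        (ENNReal.tsum_toReal_eq fun p => ENNReal.ofReal_ne_top).symm
    _ = 1 := by rw [key]; simp
end

section
/- Let Z be a random variable taking values in [0, F] for an integer F ≥ 1, and define Ξ = (Z - ⌊Z⌋)·1(⌈Z⌉ = n) + (1 - (Z - ⌊Z⌋))·1(⌊Z⌋ = n) for a fixed integer n. Then E[Ξ] = ∫₀¹ P(n + r - 1 < Z < n + 1 - r) dr. -/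
open MeasureTheory

/-- Pointwise identity: the randomized-rounding weight equals `max 0 (1 - |z - n|)`. -/
lemma pointwise_round (z : ℝ) (n : ℤ) :
    (z - (⌊z⌋ : ℝ)) * (if ⌈z⌉ = n then (1 : ℝ) else 0)
      + (1 - (z - (⌊z⌋ : ℝ))) * (if ⌊z⌋ = n then (1 : ℝ) else 0)
      = max 0 (1 - |z - n|) := by
  by_cases hfl : ⌊z⌋ = n
  · have h1 : (n : ℝ) ≤ z := by rw [← hfl]; exact Int.floor_le z
    have h2 : z < n + 1 := by rw [← hfl]; exact_mod_cast Int.lt_floor_add_one z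
    have habs : |z - n| = z - n := abs_of_nonneg (by linarith)
    by_cases hc : ⌈z⌉ = n
    · have hz : z = n := le_antisymm (by rw [← hc]; exact Int.le_ceil z) h1
      simp [hfl, hc, hz, habs]
    · simp only [hfl, hc, if_true, if_false, mul_zero, mul_one, zero_add, habs]
      rw [max_eq_right (by linarith)]
  · by_cases hc : ⌈z⌉ = n
    · have h1 : z ≤ n := by rw [← hc]; exact Int.le_ceil z
      have h2 : (n : ℝ) - 1 < z := by
        have : (n - 1 : ℤ) < ⌈z⌉ := by rw [hc]; omega
        have := Int.lt_ceil.mp this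
        push_cast at this; linarith
      have hzn : z ≠ n := fun h => hfl (by rw [h]; exact_mod_cast Int.floor_intCast n)
      have h1' : z < n := lt_of_le_of_ne h1 hzn
      have hfl' : ⌊z⌋ = n - 1 := by
        apply Int.floor_eq_iff.mpr
        constructor <;> push_cast <;> linarith
      have habs : |z - n| = n - z := by rw [abs_of_nonpos (by linarith)]; ring
      have hne : (n - 1 : ℤ) ≠ n := by omega
      simp only [hfl', hc, if_pos rfl, if_neg hne, mul_zero, mul_one, add_zero, habs]
      rw [max_eq_right (by linarith)]
      push_cast; ring
    · simp only [hfl, hc, if_false, mul_zero, add_zero]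
      rw [max_eq_left]
      by_contra h
      push_neg at h
      have habs : |z - n| < 1 := by linarith
      rw [abs_lt] at habs
      rcases le_or_gt (n : ℝ) z with hge | hlt
      · exact hfl (Int.floor_eq_iff.mpr ⟨hge, by linarith⟩)
      · exact hc (Int.ceil_eq_iff.mpr ⟨by push_cast; linarith, le_of_lt hlt⟩)

/-- Key identity in Lemma 1: the randomized-rounding probability that Z rounds
to n equals ∫₀¹ P(n + r - 1 < Z < n + 1 - r) dr. -/
theorem stmt9 {Ω : Type*} [MeasurableSpace Ω] (μ : Measure Ω) [IsProbabilityMeasure μ]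
    (F : ℕ) (hF : 1 ≤ F) (Z : Ω → ℝ) (hZ : Measurable Z)
    (hrange : ∀ ω, Z ω ∈ Set.Icc (0 : ℝ) (F : ℝ)) (n : ℤ) :
    ∫ ω, ((Z ω - (⌊Z ω⌋ : ℝ)) * (if ⌈Z ω⌉ = n then (1 : ℝ) else 0)
        + (1 - (Z ω - (⌊Z ω⌋ : ℝ))) * (if ⌊Z ω⌋ = n then (1 : ℝ) else 0)) ∂μ
      = ∫ r in (0 : ℝ)..1,
          (μ {ω | (n : ℝ) + r - 1 < Z ω ∧ Z ω < (n : ℝ) + 1 - r}).toReal := by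
  set Y : Ω → ℝ := fun ω => max 0 (1 - |Z ω - n|) with hY
  have hYmeas : Measurable Y := measurable_const.max ((hZ.sub measurable_const).abs.const_sub 1)
  have hYnn : ∀ ω, 0 ≤ Y ω := fun ω => le_max_left _ _
  have hYle : ∀ ω, Y ω ≤ 1 := fun ω => max_le zero_le_one (by
    have := abs_nonneg (Z ω - n); linarith)
  have hYint : Integrable Y μ := by
    apply Integrable.mono' (integrable_const (1 : ℝ)) hYmeas.aestronglyMeasurable
    exact Filter.Eventually.of_forall fun ω => by
      rw [Real.norm_eq_abs, abs_of_nonneg (hYnn ω)]; exact hYle ω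
  -- LHS = ∫ Y
  have hlhs : ∫ ω, ((Z ω - (⌊Z ω⌋ : ℝ)) * (if ⌈Z ω⌉ = n then (1 : ℝ) else 0)
        + (1 - (Z ω - (⌊Z ω⌋ : ℝ))) * (if ⌊Z ω⌋ = n then (1 : ℝ) else 0)) ∂μ
      = ∫ ω, Y ω ∂μ := by
    apply integral_congr_ae
    exact Filter.Eventually.of_forall fun ω => pointwise_round (Z ω) n
  rw [hlhs, hYint.integral_eq_integral_meas_lt
    (Filter.Eventually.of_forall hYnn)]
  simp only [Measure.real]
  -- truncate Ioi 0 to Ioc 0 1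
  have htrunc : ∫ t in Set.Ioi (0:ℝ), (μ {a | t < Y a}).toReal
      = ∫ t in Set.Ioc (0:ℝ) 1, (μ {a | t < Y a}).toReal := by
    rw [setIntegral_eq_of_subset_of_ae_diff_eq_zero
        nullMeasurableSet_Ioi Set.Ioc_subset_Ioi_self ?_]
    apply Filter.Eventually.of_forall (fun t ht => ?_)
    have h1t : 1 ≤ t := by
      simp only [Set.mem_diff, Set.mem_Ioi, Set.mem_Ioc, not_and, not_le] at ht
      exact le_of_lt (ht.2 ht.1)
    have : {a | t < Y a} = ∅ := by
      ext a; simp only [Set.mem_setOf_eq, Set.mem_empty_iff_false, iff_false, not_lt]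
      exact le_trans (hYle a) h1t
    simp [this]
  rw [htrunc, intervalIntegral.integral_of_le zero_le_one]
  apply setIntegral_congr_fun measurableSet_Ioc
  intro r hr
  have hset : {a | r < Y a} = {ω | (n : ℝ) + r - 1 < Z ω ∧ Z ω < (n : ℝ) + 1 - r} := by
    ext ω
    simp only [Set.mem_setOf_eq, hY]
    constructor
    · intro h
      rw [lt_max_iff] at h
      rcases h with h | h
      · exact absurd hr.1 (by linarith)
      · have h2 := abs_lt.mp (show |Z ω - (n:ℝ)| < 1 - r by linarith)
        constructor <;> linarith [h2.1, h2.2]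
    · rintro ⟨h1, h2⟩
      rw [lt_max_iff]
      right
      have h3 : |Z ω - (n:ℝ)| < 1 - r := abs_lt.mpr ⟨by linarith, by linarith⟩
      linarith
  dsimp only
  rw [hset]
end
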